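/- Let k ≥ 1 be an integer and β a real number. If b(2k) < β < b(2k−1), then γ(m, β) ≤ γ(2k−1, β) for every integer m ≥ −1, and γ(m, β) < γ(m+1, β) for every integer m with −1 ≤ m ≤ 2k−2. If instead b(2k+1) < β < b(2k), then γ(m, β) ≤ γ(2k+1, β) for every integer m ≥ −1, γ(m, β) < γ(m+1, β) for every integer m with −1 ≤ m ≤ 2k−2, and γ(2k−2, β) < γ(2k, β) < γ(2k−1, β) < γ(2k+1, β). -/

import Mathlib

/-- Pell numbers: P 0 = 0, P 1 = 1, P (m+2) = 2·P (m+1) + P m. -/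
def pell : ℕ → ℕ
  | 0 => 0
  | 1 => 1
  | m + 2 => 2 * pell (m + 1) + pell m

/-- Half-companion Pell numbers: H 0 = 1, H 1 = 1, H (m+2) = 2·H (m+1) + H m. -/
def hpell : ℕ → ℕ
  | 0 => 1
  | 1 => 1
  | m + 2 => 2 * hpell (m + 1) + hpell m

/-- For m ≥ -1, γ(m, β): for even m = 2k, γ = H(2k+2)/((β+1)·P(2k+1)); for odd
m = 2k−1, γ = 2·P(2k+1)/((β+1)·H(2k) − (β−1)).  (In particular γ(−1, β) = 1.) -/
noncomputable def gam (m : ℤ) (β : ℝ) : ℝ :=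
  if m % 2 = 0 then
    (hpell (m + 2).toNat : ℝ) / ((β + 1) * (pell (m + 1).toNat : ℝ))
  else
    2 * (pell (m + 2).toNat : ℝ) / ((β + 1) * (hpell (m + 1).toNat : ℝ) - (β - 1))

/-- b(m) = 1 + 2/(P(m+2) − 1) for even m, and 1 + 2/(H(m+1) − 1) for odd m. -/
noncomputable def bb (m : ℕ) : ℝ :=
  if m % 2 = 0 then 1 + 2 / ((pell (m+2) : ℝ) - 1) else 1 + 2 / ((hpell (m+1) : ℝ) - 1)

lemma SP : ∀ n, pell (n+1) = pell n + hpell n ∧ hpell (n+1) = hpell n + 2*pell n := by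
  intro n
  induction n with
  | zero => simp [pell, hpell]
  | succ n ih =>
    have e1 : pell (n+1+1) = 2 * pell (n+1) + pell n := rfl
    have e2 : hpell (n+1+1) = 2 * hpell (n+1) + hpell n := rfl
    omega

lemma hpell_pos (n : ℕ) : 1 ≤ hpell n := by
  induction n with
  | zero => simp [hpell]
  | succ n ih =>
    have h1 : hpell (n+1) = hpell n + 2 * pell n := (SP n).2
    omega

lemma pell_pos (n : ℕ) : 1 ≤ pell (n+1) := by
  have := (SP n).1; have := hpell_pos n; omega

lemma pell_two_le (n : ℕ) : 2 ≤ pell (n+2) := by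
  have h1 : pell (n+2) = pell (n+1) + hpell (n+1) := (SP (n+1)).1
  have := hpell_pos (n+1); have := pell_pos n; omega

lemma hpell_three_le (n : ℕ) : 3 ≤ hpell (n+2) := by
  have h1 : hpell (n+2) = hpell (n+1) + 2 * pell (n+1) := (SP (n+1)).2
  have := hpell_pos (n+1); have := pell_pos n; omega

lemma hpell_mono (n : ℕ) : hpell n ≤ hpell (n+1) := by
  have := (SP n).2; omega

lemma hpell_lt_pell (n : ℕ) : hpell n < pell (n+2) := by
  have h1 : pell (n+2) = pell (n+1) + hpell (n+1) := (SP (n+1)).1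
  have h2 : hpell (n+1) = hpell n + 2 * pell n := (SP n).2
  have := pell_pos n
  omega

lemma pell_lt_hpell (n : ℕ) : pell (n+2) < hpell (n+2) := by
  have h1 : pell (n+2) = pell (n+1) + hpell (n+1) := (SP (n+1)).1
  have h2 : hpell (n+2) = hpell (n+1) + 2 * pell (n+1) := (SP (n+1)).2
  have := pell_pos n
  omega

lemma d2 (n : ℕ) : ((hpell n : ℤ))^2 = 2*(pell n : ℤ)^2 + (-1)^n := by
  induction n with
  | zero => simp [pell, hpell]
  | succ n ih =>
    have h1 : (pell (n+1) : ℤ) = pell n + hpell n := by exact_mod_cast congrArg (Nat.cast : ℕ → ℤ) (SP n).1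
    have h2 : (hpell (n+1) : ℤ) = hpell n + 2*pell n := by exact_mod_cast congrArg (Nat.cast : ℕ → ℤ) (SP n).2
    rw [h1, h2, pow_succ]
    linear_combination (-1) * ih

lemma hd2odd (j : ℕ) : ((hpell (2*j+1) : ℤ))^2 = 2*(pell (2*j+1) : ℤ)^2 - 1 := by
  have hd := d2 (2*j+1)
  have hodd : ((-1:ℤ))^(2*j+1) = -1 := Odd.neg_one_pow ⟨j, by ring⟩
  rw [hodd] at hd; linarith

lemma idA (j : ℕ) : (hpell (2*j+2) : ℤ) * hpell (2*j) = 2*(pell (2*j+1) : ℤ)^2 + 1 := by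
  have c0a : (pell (2*j+1) : ℤ) = pell (2*j) + hpell (2*j) := by exact_mod_cast congrArg (Nat.cast : ℕ → ℤ) (SP (2*j)).1
  have c0b : (hpell (2*j+1) : ℤ) = hpell (2*j) + 2*pell (2*j) := by exact_mod_cast congrArg (Nat.cast : ℕ → ℤ) (SP (2*j)).2
  have ex0 : (hpell (2*j) : ℤ) = 2*pell (2*j+1) - hpell (2*j+1) := by omega
  have ex2 : (hpell (2*j+2) : ℤ) = hpell (2*j+1) + 2*pell (2*j+1) := by exact_mod_cast congrArg (Nat.cast : ℕ → ℤ) (SP (2*j+1)).2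
  have hd := hd2odd j
  rw [ex0, ex2]; linear_combination (-1) * hd

lemma idB (j : ℕ) : 2*(pell (2*j+3) : ℤ) * pell (2*j+1) = (hpell (2*j+2) : ℤ)^2 + 1 := by
  have c1 : (pell (2*j+2) : ℤ) = pell (2*j+1) + hpell (2*j+1) := by exact_mod_cast congrArg (Nat.cast : ℕ → ℤ) (SP (2*j+1)).1
  have c2 : (hpell (2*j+2) : ℤ) = hpell (2*j+1) + 2*pell (2*j+1) := by exact_mod_cast congrArg (Nat.cast : ℕ → ℤ) (SP (2*j+1)).2
  have c3 : (pell (2*j+3) : ℤ) = pell (2*j+2) + hpell (2*j+2) := by exact_mod_cast congrArg (Nat.cast : ℕ → ℤ) (SP (2*j+2)).1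
  have ex3 : (pell (2*j+3) : ℤ) = 2*hpell (2*j+1) + 3*pell (2*j+1) := by omega
  have hd := hd2odd j
  rw [ex3, c2]; linear_combination (-1) * hd

lemma idC (j : ℕ) : (pell (2*j+3) : ℤ) * hpell (2*j) = (pell (2*j+1) : ℤ) * hpell (2*j+2) + 2 := by
  have c0a : (pell (2*j+1) : ℤ) = pell (2*j) + hpell (2*j) := by exact_mod_cast congrArg (Nat.cast : ℕ → ℤ) (SP (2*j)).1
  have c0b : (hpell (2*j+1) : ℤ) = hpell (2*j) + 2*pell (2*j) := by exact_mod_cast congrArg (Nat.cast : ℕ → ℤ) (SP (2*j)).2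
  have c1 : (pell (2*j+2) : ℤ) = pell (2*j+1) + hpell (2*j+1) := by exact_mod_cast congrArg (Nat.cast : ℕ → ℤ) (SP (2*j+1)).1
  have c2 : (hpell (2*j+2) : ℤ) = hpell (2*j+1) + 2*pell (2*j+1) := by exact_mod_cast congrArg (Nat.cast : ℕ → ℤ) (SP (2*j+1)).2
  have c3 : (pell (2*j+3) : ℤ) = pell (2*j+2) + hpell (2*j+2) := by exact_mod_cast congrArg (Nat.cast : ℕ → ℤ) (SP (2*j+2)).1
  have ex0 : (hpell (2*j) : ℤ) = 2*pell (2*j+1) - hpell (2*j+1) := by omega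
  have ex3 : (pell (2*j+3) : ℤ) = 2*hpell (2*j+1) + 3*pell (2*j+1) := by omega
  have hd := hd2odd j
  rw [ex3, ex0, c2]; linear_combination (-2) * hd

lemma idD (j : ℕ) : (hpell (2*j+4) : ℤ) * pell (2*j+1) = (hpell (2*j+2) : ℤ) * pell (2*j+3) + 2 := by
  have c1 : (pell (2*j+2) : ℤ) = pell (2*j+1) + hpell (2*j+1) := by exact_mod_cast congrArg (Nat.cast : ℕ → ℤ) (SP (2*j+1)).1
  have c2 : (hpell (2*j+2) : ℤ) = hpell (2*j+1) + 2*pell (2*j+1) := by exact_mod_cast congrArg (Nat.cast : ℕ → ℤ) (SP (2*j+1)).2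
  have c3 : (pell (2*j+3) : ℤ) = pell (2*j+2) + hpell (2*j+2) := by exact_mod_cast congrArg (Nat.cast : ℕ → ℤ) (SP (2*j+2)).1
  have c4 : (hpell (2*j+3) : ℤ) = hpell (2*j+2) + 2*pell (2*j+2) := by exact_mod_cast congrArg (Nat.cast : ℕ → ℤ) (SP (2*j+2)).2
  have c5 : (hpell (2*j+4) : ℤ) = hpell (2*j+3) + 2*pell (2*j+3) := by exact_mod_cast congrArg (Nat.cast : ℕ → ℤ) (SP (2*j+3)).2
  have ex3 : (pell (2*j+3) : ℤ) = 2*hpell (2*j+1) + 3*pell (2*j+1) := by omega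
  have ex4 : (hpell (2*j+4) : ℤ) = 7*hpell (2*j+1) + 10*pell (2*j+1) := by omega
  have hd := hd2odd j
  rw [ex4, ex3, c2]; linear_combination (-2) * hd

lemma gam_even (β : ℝ) (j : ℕ) :
    gam (2*(j:ℤ)) β = (hpell (2*j+2) : ℝ) / ((β + 1) * (pell (2*j+1) : ℝ)) := by
  have h1 : (2*(j:ℤ)) % 2 = 0 := by omega
  have h2 : (2*(j:ℤ) + 2).toNat = 2*j+2 := by omega
  have h3 : (2*(j:ℤ) + 1).toNat = 2*j+1 := by omega
  rw [gam, if_pos h1, h2, h3]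

lemma gam_odd (β : ℝ) (j : ℕ) :
    gam (2*(j:ℤ)-1) β = 2 * (pell (2*j+1) : ℝ) / ((β + 1) * (hpell (2*j) : ℝ) - (β - 1)) := by
  have h1 : ¬ ((2*(j:ℤ)-1) % 2 = 0) := by omega
  have h2 : (2*(j:ℤ)-1 + 2).toNat = 2*j+1 := by omega
  have h3 : (2*(j:ℤ)-1 + 1).toNat = 2*j := by omega
  rw [gam, if_neg h1, h2, h3]

lemma gam_odd' (β : ℝ) (j : ℕ) :
    gam (2*(j:ℤ)+1) β = 2 * (pell (2*j+3) : ℝ) / ((β + 1) * (hpell (2*j+2) : ℝ) - (β - 1)) := by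
  have h : (2*(j:ℤ)+1) = 2*((j+1:ℕ):ℤ)-1 := by push_cast; ring
  rw [h, gam_odd]
  norm_num [show 2*(j+1) = 2*j+2 from by ring, show 2*(j+1)+1 = 2*j+3 from by ring]

lemma bb_even (j : ℕ) : bb (2*j) = 1 + 2 / ((pell (2*j+2) : ℝ) - 1) := by
  rw [bb, if_pos (by omega)]

lemma bb_odd (j : ℕ) : bb (2*j+1) = 1 + 2 / ((hpell (2*j+2) : ℝ) - 1) := by
  rw [bb, if_neg (by omega)]

lemma bb_gt_one (m : ℕ) : 1 < bb m := by
  rw [bb]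
  split_ifs with h
  · have h2 := pell_two_le m
    have : (0:ℝ) < (pell (m+2) : ℝ) - 1 := by
      have : (2:ℝ) ≤ (pell (m+2) : ℝ) := by exact_mod_cast h2
      linarith
    have : 0 < 2 / ((pell (m+2) : ℝ) - 1) := by positivity
    linarith
  · obtain ⟨n, rfl⟩ : ∃ n, m = n + 1 := ⟨m - 1, by omega⟩
    have h2 := hpell_three_le n
    have : (0:ℝ) < (hpell (n+2) : ℝ) - 1 := by
      have : (3:ℝ) ≤ (hpell (n+2) : ℝ) := by exact_mod_cast h2
      linarith
    have : 0 < 2 / ((hpell (n+1+1) : ℝ) - 1) := by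
      have e : n+1+1 = n+2 := rfl
      rw [e]; positivity
    linarith

lemma bb_succ_lt (m : ℕ) : bb (m+1) < bb m := by
  rcases Nat.even_or_odd m with he | ho
  · have h0 : m % 2 = 0 := Nat.even_iff.mp he
    rw [bb, bb, if_pos h0, if_neg (by omega)]
    have hlt := pell_lt_hpell m
    have h2 := pell_two_le m
    have hp : (2:ℝ) ≤ (pell (m+2) : ℝ) := by exact_mod_cast h2
    have hh : (pell (m+2) : ℝ) < (hpell (m+2) : ℝ) := by exact_mod_cast hlt
    have e : m+1+1 = m+2 := rfl
    rw [e]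
    have := div_lt_div_of_pos_left (show (0:ℝ) < 2 by norm_num)
      (show (0:ℝ) < (pell (m+2):ℝ) - 1 by linarith) (show ((pell (m+2):ℝ) - 1) < (hpell (m+2):ℝ) - 1 by linarith)
    linarith
  · have h1 : ¬ (m % 2 = 0) := by have := Nat.odd_iff.mp ho; omega
    obtain ⟨n, rfl⟩ : ∃ n, m = n + 1 := ⟨m - 1, by omega⟩
    rw [bb, bb, if_neg h1, if_pos (by omega)]
    have hlt := hpell_lt_pell (n+2)
    have h3 := hpell_three_le n
    have hh : (3:ℝ) ≤ (hpell (n+2) : ℝ) := by exact_mod_cast h3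
    have hp : (hpell (n+2) : ℝ) < (pell (n+4) : ℝ) := by exact_mod_cast hlt
    have e1 : n+1+1 = n+2 := rfl
    have e2 : n+1+1+2 = n+4 := rfl
    rw [e1, e2]
    have := div_lt_div_of_pos_left (show (0:ℝ) < 2 by norm_num)
      (show (0:ℝ) < (hpell (n+2):ℝ) - 1 by linarith) (show ((hpell (n+2):ℝ) - 1) < (pell (n+4):ℝ) - 1 by linarith)
    linarith

lemma bb_anti {a b : ℕ} (h : a ≤ b) : bb b ≤ bb a := by
  induction b, h using Nat.le_induction with
  | base => exact le_refl _
  | succ n hn ih => exact le_trans (bb_succ_lt n).le ih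

lemma bb_anti_strict {a b : ℕ} (h : a < b) : bb b < bb a := by
  induction b, (show a + 1 ≤ b from h) using Nat.le_induction with
  | base => exact bb_succ_lt a
  | succ n hn ih => exact lt_trans (bb_succ_lt n) (ih hn)

lemma denO_pos (β : ℝ) (hβ : 1 < β) (n : ℕ) : 0 < (β+1) * (hpell n : ℝ) - (β-1) := by
  have h1 : (1:ℝ) ≤ (hpell n : ℝ) := by exact_mod_cast hpell_pos n
  nlinarith

lemma denE_pos (β : ℝ) (hβ : 1 < β) (n : ℕ) : 0 < (β+1) * (pell (n+1) : ℝ) := by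
  have h1 : (1:ℝ) ≤ (pell (n+1) : ℝ) := by exact_mod_cast pell_pos n
  nlinarith

lemma keyH (β : ℝ) (j : ℕ) (hβb : β < bb (2*j+1)) : (β-1) * (hpell (2*j+2) : ℝ) < β + 1 := by
  rw [bb_odd] at hβb
  have hH : (3:ℝ) ≤ (hpell (2*j+2) : ℝ) := by exact_mod_cast hpell_three_le (2*j)
  have h4 : β - 1 < 2 / ((hpell (2*j+2):ℝ) - 1) := by linarith
  have h5 : (β-1) * ((hpell (2*j+2):ℝ) - 1) < 2 := (lt_div_iff₀ (by linarith)).mp h4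
  nlinarith

lemma keyH' (β : ℝ) (j : ℕ) (hβb : bb (2*j+1) < β) : β + 1 < (β-1) * (hpell (2*j+2) : ℝ) := by
  rw [bb_odd] at hβb
  have hH : (3:ℝ) ≤ (hpell (2*j+2) : ℝ) := by exact_mod_cast hpell_three_le (2*j)
  have h4 : 2 / ((hpell (2*j+2):ℝ) - 1) < β - 1 := by linarith
  have h5 : 2 < (β-1) * ((hpell (2*j+2):ℝ) - 1) := (div_lt_iff₀ (by linarith)).mp h4
  nlinarith

lemma keyP (β : ℝ) (j : ℕ) (hβb : β < bb (2*j)) : (β-1) * (pell (2*j+2) : ℝ) < β + 1 := by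
  rw [bb_even] at hβb
  have hP : (2:ℝ) ≤ (pell (2*j+2) : ℝ) := by exact_mod_cast pell_two_le (2*j)
  have h4 : β - 1 < 2 / ((pell (2*j+2):ℝ) - 1) := by linarith
  have h5 : (β-1) * ((pell (2*j+2):ℝ) - 1) < 2 := (lt_div_iff₀ (by linarith)).mp h4
  nlinarith

lemma keyP' (β : ℝ) (j : ℕ) (hβb : bb (2*j) < β) : β + 1 < (β-1) * (pell (2*j+2) : ℝ) := by
  rw [bb_even] at hβb
  have hP : (2:ℝ) ≤ (pell (2*j+2) : ℝ) := by exact_mod_cast pell_two_le (2*j)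
  have h4 : 2 / ((pell (2*j+2):ℝ) - 1) < β - 1 := by linarith
  have h5 : 2 < (β-1) * ((pell (2*j+2):ℝ) - 1) := (div_lt_iff₀ (by linarith)).mp h4
  nlinarith

lemma lemA1 (β : ℝ) (hβ : 1 < β) (j : ℕ) (hβb : β < bb (2*j+1)) :
    gam (2*(j:ℤ)-1) β < gam (2*(j:ℤ)) β := by
  rw [gam_odd, gam_even, div_lt_div_iff₀ (denO_pos β hβ (2*j)) (denE_pos β hβ (2*j))]
  have iA : (hpell (2*j+2):ℝ) * (hpell (2*j):ℝ) = 2*(pell (2*j+1):ℝ)^2 + 1 := by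
    exact_mod_cast idA j
  have key := keyH β j hβb
  have e : (hpell (2*j+2):ℝ) * ((β+1)*(hpell (2*j):ℝ) - (β-1))
      = (β+1)*(2*(pell (2*j+1):ℝ)^2+1) - (β-1)*(hpell (2*j+2):ℝ) := by
    linear_combination (β+1) * iA
  nlinarith [e, key]

lemma lemA2 (β : ℝ) (hβ : 1 < β) (j : ℕ) (hβb : bb (2*j+1) < β) :
    gam (2*(j:ℤ)) β < gam (2*(j:ℤ)-1) β := by
  rw [gam_odd, gam_even, div_lt_div_iff₀ (denE_pos β hβ (2*j)) (denO_pos β hβ (2*j))]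
  have iA : (hpell (2*j+2):ℝ) * (hpell (2*j):ℝ) = 2*(pell (2*j+1):ℝ)^2 + 1 := by
    exact_mod_cast idA j
  have key := keyH' β j hβb
  have e : (hpell (2*j+2):ℝ) * ((β+1)*(hpell (2*j):ℝ) - (β-1))
      = (β+1)*(2*(pell (2*j+1):ℝ)^2+1) - (β-1)*(hpell (2*j+2):ℝ) := by
    linear_combination (β+1) * iA
  nlinarith [e, key]

lemma lemB (β : ℝ) (hβ : 1 < β) (j : ℕ) :
    gam (2*(j:ℤ)) β < gam (2*(j:ℤ)+1) β := by
  rw [gam_even, gam_odd', div_lt_div_iff₀ (denE_pos β hβ (2*j)) (denO_pos β hβ (2*j+2))]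
  have iB : 2*(pell (2*j+3):ℝ) * (pell (2*j+1):ℝ) = (hpell (2*j+2):ℝ)^2 + 1 := by
    exact_mod_cast idB j
  have e : 2*(pell (2*j+3):ℝ) * ((β+1)*(pell (2*j+1):ℝ))
      = (β+1)*((hpell (2*j+2):ℝ)^2 + 1) := by
    linear_combination (β+1) * iB
  have hH : (3:ℝ) ≤ (hpell (2*j+2) : ℝ) := by exact_mod_cast hpell_three_le (2*j)
  nlinarith [e, hH]

lemma lemC1 (β : ℝ) (hβ : 1 < β) (j : ℕ) (hβb : β < bb (2*j)) :
    gam (2*(j:ℤ)-1) β < gam (2*(j:ℤ)+1) β := by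
  rw [gam_odd, gam_odd', div_lt_div_iff₀ (denO_pos β hβ (2*j)) (denO_pos β hβ (2*j+2))]
  have iC : (pell (2*j+3):ℝ) * (hpell (2*j):ℝ) = (pell (2*j+1):ℝ) * (hpell (2*j+2):ℝ) + 2 := by
    exact_mod_cast idC j
  have recP : (pell (2*j+3):ℝ) = 2*(pell (2*j+2):ℝ) + (pell (2*j+1):ℝ) := by
    exact_mod_cast congrArg (Nat.cast : ℕ → ℝ) (show pell (2*j+3) = 2*pell (2*j+2) + pell (2*j+1) from rfl)
  have key := keyP β j hβb
  have e : 2*(pell (2*j+3):ℝ)*((β+1)*(hpell (2*j):ℝ)-(β-1))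
      - 2*(pell (2*j+1):ℝ)*((β+1)*(hpell (2*j+2):ℝ)-(β-1))
      = 4*(β+1) - 4*(β-1)*(pell (2*j+2):ℝ) := by
    linear_combination 2*(β+1)*iC - 2*(β-1)*recP
  nlinarith [e, key]

lemma lemC2 (β : ℝ) (hβ : 1 < β) (j : ℕ) (hβb : bb (2*j) < β) :
    gam (2*(j:ℤ)+1) β < gam (2*(j:ℤ)-1) β := by
  rw [gam_odd, gam_odd', div_lt_div_iff₀ (denO_pos β hβ (2*j+2)) (denO_pos β hβ (2*j))]
  have iC : (pell (2*j+3):ℝ) * (hpell (2*j):ℝ) = (pell (2*j+1):ℝ) * (hpell (2*j+2):ℝ) + 2 := by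
    exact_mod_cast idC j
  have recP : (pell (2*j+3):ℝ) = 2*(pell (2*j+2):ℝ) + (pell (2*j+1):ℝ) := by
    exact_mod_cast congrArg (Nat.cast : ℕ → ℝ) (show pell (2*j+3) = 2*pell (2*j+2) + pell (2*j+1) from rfl)
  have key := keyP' β j hβb
  have e : 2*(pell (2*j+3):ℝ)*((β+1)*(hpell (2*j):ℝ)-(β-1))
      - 2*(pell (2*j+1):ℝ)*((β+1)*(hpell (2*j+2):ℝ)-(β-1))
      = 4*(β+1) - 4*(β-1)*(pell (2*j+2):ℝ) := by
    linear_combination 2*(β+1)*iC - 2*(β-1)*recP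
  nlinarith [e, key]

lemma lemD (β : ℝ) (hβ : 1 < β) (j : ℕ) :
    gam (2*(j:ℤ)) β < gam (2*(j:ℤ)+2) β := by
  have h : (2*(j:ℤ)+2) = 2*(((j+1):ℕ):ℤ) := by push_cast; ring
  rw [h, gam_even, gam_even]
  simp only [show 2*(j+1)+2 = 2*j+4 from by ring, show 2*(j+1)+1 = 2*j+3 from by ring]
  rw [div_lt_div_iff₀ (denE_pos β hβ (2*j)) (denE_pos β hβ (2*j+2))]
  have iD : (hpell (2*j+4):ℝ) * (pell (2*j+1):ℝ) = (hpell (2*j+2):ℝ) * (pell (2*j+3):ℝ) + 2 := by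
    exact_mod_cast idD j
  have e : (hpell (2*j+4):ℝ) * ((β+1)*(pell (2*j+1):ℝ))
      = (hpell (2*j+2):ℝ) * ((β+1)*(pell (2*j+3):ℝ)) + 2*(β+1) := by
    linear_combination (β+1) * iD
  nlinarith [e]

lemma int_parity (m : ℤ) (_h : -1 ≤ m) : ∃ j : ℕ, m = 2*(j:ℤ) ∨ m = 2*(j:ℤ) - 1 := by
  rcases Int.even_or_odd m with ⟨t, ht⟩ | ⟨t, ht⟩
  · rcases le_or_gt 0 m with h0 | h0
    · exact ⟨t.toNat, Or.inl (by omega)⟩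
    · exact ⟨0, Or.inr (by omega)⟩
  · rcases le_or_gt 0 (t+1) with h0 | h0
    · exact ⟨(t+1).toNat, Or.inr (by omega)⟩
    · exact ⟨0, Or.inr (by omega)⟩

lemma main_step (k : ℕ) (hk : 1 ≤ k) (β : ℝ) (hβ : 1 < β) (hβ2 : β < bb (2*k-1)) :
    ∀ m : ℤ, -1 ≤ m → m ≤ 2*(k:ℤ)-2 → gam m β < gam (m+1) β := by
  intro m h1 h2
  obtain ⟨j, hj | hj⟩ := int_parity m h1
  · subst hj
    have e : (2*(j:ℤ)+1) = 2*(j:ℤ)+1 := rfl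
    exact lemB β hβ j
  · subst hj
    have e : (2*(j:ℤ)-1+1) = 2*(j:ℤ) := by ring
    rw [e]
    have hjk : 2*j+1 ≤ 2*k-1 := by omega
    exact lemA1 β hβ j (lt_of_lt_of_le hβ2 (bb_anti hjk))

lemma chain_le (k : ℕ) (hk : 1 ≤ k) (β : ℝ) (hβ : 1 < β) (hβ2 : β < bb (2*k-1)) :
    ∀ m : ℤ, -1 ≤ m → m ≤ 2*(k:ℤ)-1 → gam m β ≤ gam (2*(k:ℤ)-1) β := by
  have H : ∀ d : ℕ, ∀ m : ℤ, -1 ≤ m → m + d = 2*(k:ℤ)-1 → gam m β ≤ gam (2*(k:ℤ)-1) β := by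
    intro d
    induction d with
    | zero =>
      intro m h1 h2
      have e : m = 2*(k:ℤ)-1 := by omega
      exact le_of_eq (by rw [e])
    | succ d ih =>
      intro m h1 h2
      have hs := main_step k hk β hβ hβ2 m h1 (by omega)
      exact le_trans hs.le (ih (m+1) (by omega) (by omega))
  intro m h1 h2
  exact H (2*(k:ℤ)-1 - m).toNat m h1 (by omega)

lemma tail1 (k : ℕ) (β : ℝ) (hβ : 1 < β) (hβ3 : bb (2*k) < β) :
    ∀ j : ℕ, k ≤ j → gam (2*(j:ℤ)-1) β ≤ gam (2*(k:ℤ)-1) β := by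
  intro j hj
  induction j, hj using Nat.le_induction with
  | base => exact le_refl _
  | succ n hn ih =>
    have hb : bb (2*n) < β := by
      rcases Nat.eq_or_lt_of_le hn with h | h
      · rw [← h]; exact hβ3
      · exact lt_of_le_of_lt (bb_anti (by omega)) hβ3
    have step := lemC2 β hβ n hb
    have e : (2*(((n+1):ℕ)):ℤ)-1 = 2*(n:ℤ)+1 := by push_cast; ring
    rw [e]
    exact le_trans step.le ih

lemma case1 (k : ℕ) (hk : 1 ≤ k) (β : ℝ) (hβ3 : bb (2*k) < β) (hβ2 : β < bb (2*k-1)) :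
    ∀ m : ℤ, -1 ≤ m → gam m β ≤ gam (2*(k:ℤ)-1) β := by
  have hβ : 1 < β := lt_trans (bb_gt_one (2*k)) hβ3
  intro m h1
  obtain ⟨j, hj | hj⟩ := int_parity m h1
  · subst hj
    by_cases hc : (j:ℤ) ≤ (k:ℤ)-1
    · exact chain_le k hk β hβ hβ2 _ h1 (by omega)
    · have hb := lemB β hβ j
      have e : (2*(j:ℤ)+1) = 2*(((j+1):ℕ):ℤ)-1 := by push_cast; ring
      rw [e] at hb
      exact le_trans hb.le (tail1 k β hβ hβ3 (j+1) (by omega))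
  · subst hj
    by_cases hc : (j:ℤ) ≤ (k:ℤ)
    · exact chain_le k hk β hβ hβ2 _ h1 (by omega)
    · exact tail1 k β hβ hβ3 j (by omega)

lemma tail2 (k : ℕ) (β : ℝ) (hβ : 1 < β) (hβ3 : bb (2*k+1) < β) :
    ∀ j : ℕ, k+1 ≤ j → gam (2*(j:ℤ)-1) β ≤ gam (2*(k:ℤ)+1) β := by
  intro j hj
  induction j, hj using Nat.le_induction with
  | base =>
    have e : (2*(((k+1):ℕ)):ℤ)-1 = 2*(k:ℤ)+1 := by push_cast; ring
    exact le_of_eq (by rw [e])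
  | succ n hn ih =>
    have hb : bb (2*n) < β := lt_of_le_of_lt (bb_anti (by omega)) (lt_trans (bb_succ_lt (2*k+1)) (by
      exact lt_of_le_of_lt (le_refl _) hβ3))
    have step := lemC2 β hβ n hb
    have e : (2*(((n+1):ℕ)):ℤ)-1 = 2*(n:ℤ)+1 := by push_cast; ring
    rw [e]
    exact le_trans step.le ih

lemma case2 (k : ℕ) (hk : 1 ≤ k) (β : ℝ) (hβ3 : bb (2*k+1) < β) (hβ2' : β < bb (2*k)) :
    ∀ m : ℤ, -1 ≤ m → gam m β ≤ gam (2*(k:ℤ)+1) β := by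
  have hβ : 1 < β := lt_trans (bb_gt_one (2*k+1)) hβ3
  have hβ2 : β < bb (2*k-1) := lt_trans hβ2' (bb_anti_strict (show 2*k-1 < 2*k by omega))
  have hC1 : gam (2*(k:ℤ)-1) β < gam (2*(k:ℤ)+1) β := lemC1 β hβ k hβ2'
  intro m h1
  obtain ⟨j, hj | hj⟩ := int_parity m h1
  · subst hj
    by_cases hc : (j:ℤ) ≤ (k:ℤ)-1
    · exact le_trans (chain_le k hk β hβ hβ2 _ h1 (by omega)) hC1.le
    · by_cases hc2 : j = k
      · subst hc2; exact (lemB β hβ j).le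
      · have hb := lemB β hβ j
        have e : (2*(j:ℤ)+1) = 2*(((j+1):ℕ):ℤ)-1 := by push_cast; ring
        rw [e] at hb
        exact le_trans hb.le (tail2 k β hβ hβ3 (j+1) (by omega))
  · subst hj
    by_cases hc : (j:ℤ) ≤ (k:ℤ)
    · exact le_trans (chain_le k hk β hβ hβ2 _ h1 (by omega)) hC1.le
    · exact tail2 k β hβ hβ3 j (by omega)


theorem stmt_4 (k : ℕ) (hk : 1 ≤ k) (β : ℝ) :
    (bb (2*k) < β → β < bb (2*k-1) →
      (∀ m : ℤ, -1 ≤ m → gam m β ≤ gam (2*(k:ℤ)-1) β) ∧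
      (∀ m : ℤ, -1 ≤ m → m ≤ 2*(k:ℤ)-2 → gam m β < gam (m+1) β)) ∧
    (bb (2*k+1) < β → β < bb (2*k) →
      (∀ m : ℤ, -1 ≤ m → gam m β ≤ gam (2*(k:ℤ)+1) β) ∧
      (∀ m : ℤ, -1 ≤ m → m ≤ 2*(k:ℤ)-2 → gam m β < gam (m+1) β) ∧
      gam (2*(k:ℤ)-2) β < gam (2*(k:ℤ)) β ∧
      gam (2*(k:ℤ)) β < gam (2*(k:ℤ)-1) β ∧
      gam (2*(k:ℤ)-1) β < gam (2*(k:ℤ)+1) β) := by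
  constructor
  · intro hβ3 hβ2
    have hβ : 1 < β := lt_trans (bb_gt_one (2*k)) hβ3
    exact ⟨case1 k hk β hβ3 hβ2, main_step k hk β hβ hβ2⟩
  · intro hβ3 hβ2'
    have hβ : 1 < β := lt_trans (bb_gt_one (2*k+1)) hβ3
    have hβ2 : β < bb (2*k-1) := lt_trans hβ2' (bb_anti_strict (show 2*k-1 < 2*k by omega))
    refine ⟨case2 k hk β hβ3 hβ2', main_step k hk β hβ hβ2, ?_, lemA2 β hβ k hβ3, lemC1 β hβ k hβ2'⟩
    have hD := lemD β hβ (k-1)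
    have e1 : (2*(((k-1):ℕ)):ℤ) = 2*(k:ℤ)-2 := by omega
    rw [e1] at hD
    have e2 : (2*(k:ℤ)-2+2) = 2*(k:ℤ) := by ring
    rw [e2] at hD
    exact hD
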